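/- arXiv:1401.6963 — 5 statements merged into one kernel-verified Lean document; each statement's English description precedes it below -/
import Mathlib

section
/- (Lemma 3.) Let V be a finite type and let P be a collection of finite subsets of V with the property that whenever A, B ∈ P satisfy |A| = |B| and |A ∩ B| = |A| − 1, then A ∩ B ∈ P. Let S = 2^V \ P be the complement collection. Then S satisfies the greedoid augmentation property G3: for any A, B ∈ S with |A| > |B|, there exists an element a ∈ A \ B such that B ∪ {a} ∈ S. -/
/-- Lemma 3: if the family `P` of finite subsets of `V` is closed under intersecting two
members of equal cardinality whose intersection has one fewer element, then the
complement family `S = 2^V \ P` satisfies the greedoid augmentation property G3: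
for `A, B ∉ P` with `|A| > |B|`, there is `a ∈ A \ B` with `B ∪ {a} ∉ P`. -/
theorem complement_satisfies_G3 {V : Type*} [Fintype V] [DecidableEq V]
    (P : Set (Finset V))
    (hP : ∀ A B : Finset V, A ∈ P → B ∈ P → A.card = B.card →
      (A ∩ B).card = A.card - 1 → A ∩ B ∈ P)
    (A B : Finset V) (hA : A ∉ P) (hB : B ∉ P) (hcard : B.card < A.card) :
    ∃ a ∈ A \ B, insert a B ∉ P := by
  by_contra h
  push_neg at h
  have hns : ¬ A ⊆ B := fun hs => absurd (Finset.card_le_card hs) (not_le.2 hcard)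
  obtain ⟨a, haA, haB⟩ := Finset.not_subset.mp hns
  have ha : a ∈ A \ B := Finset.mem_sdiff.mpr ⟨haA, haB⟩
  by_cases hb : ∃ b ∈ A \ B, b ≠ a
  · obtain ⟨b, hbAB, hba⟩ := hb
    have hbB : b ∉ B := (Finset.mem_sdiff.mp hbAB).2
    have h1 := h a ha
    have h2 := h b hbAB
    have hint : insert a B ∩ insert b B = B := by
      ext x
      simp only [Finset.mem_inter, Finset.mem_insert]
      constructor
      · rintro ⟨(rfl | hx), (h' | hx')⟩
        · exact absurd h'.symm hba
        · exact hx'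
        · exact hx
        · exact hx
      · exact fun hx => ⟨Or.inr hx, Or.inr hx⟩
    have hc1 : (insert a B).card = B.card + 1 := Finset.card_insert_of_notMem haB
    have hc2 : (insert b B).card = B.card + 1 := Finset.card_insert_of_notMem hbB
    have := hP _ _ h1 h2 (by rw [hc1, hc2]) (by rw [hint, hc1]; simp)
    rw [hint] at this
    exact hB this
  · push_neg at hb
    -- A \ B = {a}, so A = insert a B
    have hsub : A ⊆ insert a B := by
      intro x hx
      by_cases hxB : x ∈ B
      · exact Finset.mem_insert_of_mem hxB
      · have : x = a := hb x (Finset.mem_sdiff.mpr ⟨hx, hxB⟩)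
        simp [this]
    have hAeq : A = insert a B := by
      apply Finset.eq_of_subset_of_card_le hsub
      rw [Finset.card_insert_of_notMem haB]
      exact hcard
    exact hA (hAeq ▸ h a ha)
end

section
/- (Proposition 1: the class of optimal and near optimal sets satisfies G3.) Let V be a finite type and F : Finset V → ℝ a supermodular, antitone set function. Let F_min < F_max be real numbers and define the rank ρ(A) = (F_max − F(A)) / (F_max − F_min). For 0 < c ≤ 1 and 0 < K ≤ |V|, define L_{c,K} = {A ⊆ V : A ≠ ∅, |A| ≤ K, ρ(A) ≥ c}. Then L_{c,K} satisfies property G3: for any A, B ∈ L_{c,K} with |A| > |B|, there exists x ∈ A \ B such that B ∪ {x} ∈ L_{c,K}. -/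
/-- Membership in the class `L_{c,K}` of optimal and near optimal sets: `A` is nonempty,
has at most `K` elements, and its rank `ρ(A) = (F_max − F(A))/(F_max − F_min)` is at
least `c`. -/
def memL {V : Type*} [Fintype V] [DecidableEq V] (F : Finset V → ℝ)
    (Fmin Fmax c : ℝ) (K : ℕ) (A : Finset V) : Prop :=
  A.Nonempty ∧ A.card ≤ K ∧ c ≤ (Fmax - F A) / (Fmax - Fmin)

/-- Proposition 1: for a supermodular antitone `F`, the class `L_{c,K}` of optimal and
near optimal sets satisfies the greedoid augmentation property G3. -/
theorem L_satisfies_G3 {V : Type*} [Fintype V] [DecidableEq V]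
    (F : Finset V → ℝ)
    (hsuper : ∀ A B : Finset V, F A + F B ≤ F (A ∪ B) + F (A ∩ B))
    (hanti : ∀ A B : Finset V, A ⊆ B → F B ≤ F A)
    (Fmin Fmax : ℝ) (hminmax : Fmin < Fmax)
    (c : ℝ) (hc0 : 0 < c) (hc1 : c ≤ 1)
    (K : ℕ) (hK0 : 0 < K) (hKN : K ≤ Fintype.card V)
    (A B : Finset V)
    (hA : memL F Fmin Fmax c K A) (hB : memL F Fmin Fmax c K B)
    (hcard : B.card < A.card) :
    ∃ x ∈ A \ B, memL F Fmin Fmax c K (insert x B) := by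
  have hns : ¬ A ⊆ B := fun h => absurd (Finset.card_le_card h) (by omega)
  obtain ⟨x, hx⟩ := Finset.sdiff_nonempty.mpr hns
  have hxB : x ∉ B := (Finset.mem_sdiff.mp hx).2
  refine ⟨x, hx, ⟨x, Finset.mem_insert_self x B⟩, ?_, ?_⟩
  · have h1 : (insert x B).card = B.card + 1 := Finset.card_insert_of_notMem hxB
    have h2 : A.card ≤ K := hA.2.1
    omega
  · have hF : F (insert x B) ≤ F B :=
      hanti B (insert x B) (Finset.subset_insert x B)
    have h3 := hB.2.2
    have hd : 0 < Fmax - Fmin := by linarith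
    have : (Fmax - F B) / (Fmax - Fmin) ≤ (Fmax - F (insert x B)) / (Fmax - Fmin) := by
      gcongr <;> linarith
    linarith
end

section
/- (Iterated elemental curvature bound.) Let V be a finite type, ρ : Finset V → ℝ a monotone non-decreasing set function (A ⊆ B implies ρ(A) ≤ ρ(B)), and κ ≥ 0 a real number such that for all S ⊆ V and all distinct i, j ∉ S: ρ_i(S ∪ {j}) ≤ κ · ρ_i(S), where ρ_i(A) := ρ(A ∪ {i}) − ρ(A) denotes the marginal increase. Then for any S ⊆ V, any i ∉ S, and any set J ⊆ V disjoint from S ∪ {i}: ρ_i(S ∪ J) ≤ κ^{|J|} · ρ_i(S). -/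
/-- Iterated elemental curvature bound: if `ρ` is monotone non-decreasing and `κ ≥ 0`
satisfies `ρ_i(S ∪ {j}) ≤ κ · ρ_i(S)` for all `S` and distinct `i, j ∉ S` (where
`ρ_i(A) = ρ(A ∪ {i}) − ρ(A)`), then for any `S`, `i ∉ S`, and `J` disjoint from
`S ∪ {i}`, `ρ_i(S ∪ J) ≤ κ^{|J|} · ρ_i(S)`. -/
theorem iterated_elemental_curvature {V : Type*} [Fintype V] [DecidableEq V]
    (ρ : Finset V → ℝ)
    (hmono : ∀ A B : Finset V, A ⊆ B → ρ A ≤ ρ B)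
    (κ : ℝ) (hκ : 0 ≤ κ)
    (hcurv : ∀ (S : Finset V) (i j : V), i ≠ j → i ∉ S → j ∉ S →
      ρ (insert i (insert j S)) - ρ (insert j S) ≤ κ * (ρ (insert i S) - ρ S))
    (S : Finset V) (i : V) (hi : i ∉ S)
    (J : Finset V) (hJ : Disjoint J (insert i S)) :
    ρ (insert i (S ∪ J)) - ρ (S ∪ J) ≤ κ ^ J.card * (ρ (insert i S) - ρ S) := by
  induction J using Finset.induction_on with
  | empty => simp
  | @insert j J hjJ ih =>
    have hJdisj : Disjoint J (insert i S) :=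
      (Finset.disjoint_insert_left.mp hJ).2
    have hjmem : j ∉ insert i S := (Finset.disjoint_insert_left.mp hJ).1
    have hij : i ≠ j := fun h => hjmem (h ▸ Finset.mem_insert_self i S)
    have hiSJ : i ∉ S ∪ J := by
      simp only [Finset.mem_union, not_or]
      exact ⟨hi, fun h => Finset.disjoint_left.mp hJdisj h (Finset.mem_insert_self i S)⟩
    have hjSJ : j ∉ S ∪ J := by
      simp only [Finset.mem_union, not_or]
      exact ⟨fun h => hjmem (Finset.mem_insert_of_mem h), hjJ⟩
    have h1 := hcurv (S ∪ J) i j hij hiSJ hjSJ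
    have h2 := ih hJdisj
    have : S ∪ insert j J = insert j (S ∪ J) := by
      ext x; simp [or_comm, or_assoc, or_left_comm]
    rw [this, Finset.card_insert_of_notMem hjJ, pow_succ, mul_comm (κ ^ J.card) κ,
      mul_assoc]
    exact h1.trans (mul_le_mul_of_nonneg_left h2 hκ)
end

section
/- (Inequality (12): curvature bound on the rank gap.) Let V be a finite type, ρ : Finset V → ℝ a monotone non-decreasing set function, and κ ≥ 0 a real number such that for all S ⊆ V and all distinct i, j ∉ S: ρ_i(S ∪ {j}) ≤ κ · ρ_i(S), where ρ_i(A) := ρ(A ∪ {i}) − ρ(A). Then for any S ⊆ T ⊆ V and any enumeration j_1, …, j_r of the elements of T \ S (where r = |T \ S|): ρ(T) − ρ(S) ≤ Σ_{t=1}^{r} κ^{t−1} · ρ_{j_t}(S). -/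
private lemma curvature_aux {V : Type*} [Fintype V] [DecidableEq V]
    (ρ : Finset V → ℝ)
    (κ : ℝ) (hκ : 0 ≤ κ)
    (hcurv : ∀ (S : Finset V) (i j : V), i ≠ j → i ∉ S → j ∉ S →
      ρ (insert i (insert j S)) - ρ (insert j S) ≤ κ * (ρ (insert i S) - ρ S)) :
    ∀ (l : List V) (S : Finset V), l.Nodup → (∀ x ∈ l, x ∉ S) →
      ρ (S ∪ l.toFinset) - ρ S ≤
        ∑ t : Fin l.length, κ ^ (t : ℕ) * (ρ (insert (l.get t) S) - ρ S) := by
  intro l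
  induction l with
  | nil =>
      intro S _ _
      simp
  | cons a l ih =>
      intro S hnd hdisj
      have haS : a ∉ S := hdisj a List.mem_cons_self
      have hnd' : l.Nodup := hnd.of_cons
      have hal : a ∉ l := (List.nodup_cons.mp hnd).1
      have hdisj' : ∀ x ∈ l, x ∉ insert a S := by
        intro x hx
        simp only [Finset.mem_insert, not_or]
        exact ⟨fun h => hal (h ▸ hx), hdisj x (List.mem_cons_of_mem a hx)⟩
      have key := ih (insert a S) hnd' hdisj'
      have hset : S ∪ (a :: l).toFinset = insert a S ∪ l.toFinset := by
        simp [List.toFinset_cons, Finset.insert_union, Finset.union_insert]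
      have hterm : ∀ t : Fin l.length,
          κ ^ (t : ℕ) * (ρ (insert (l.get t) (insert a S)) - ρ (insert a S)) ≤
          κ ^ ((t : ℕ) + 1) * (ρ (insert (l.get t) S) - ρ S) := by
        intro t
        have hi : l.get t ∈ l := List.get_mem l t
        have h1 : l.get t ≠ a := fun h => hal (h ▸ hi)
        have h2 : l.get t ∉ S := hdisj _ (List.mem_cons_of_mem a hi)
        have := hcurv S (l.get t) a h1 h2 haS
        calc κ ^ (t : ℕ) * (ρ (insert (l.get t) (insert a S)) - ρ (insert a S))
            ≤ κ ^ (t : ℕ) * (κ * (ρ (insert (l.get t) S) - ρ S)) :=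
              mul_le_mul_of_nonneg_left this (pow_nonneg hκ _)
          _ = κ ^ ((t : ℕ) + 1) * (ρ (insert (l.get t) S) - ρ S) := by ring
      have hsum : ∑ t : Fin l.length,
            κ ^ (t : ℕ) * (ρ (insert (l.get t) (insert a S)) - ρ (insert a S)) ≤
          ∑ t : Fin l.length, κ ^ ((t : ℕ) + 1) * (ρ (insert (l.get t) S) - ρ S) :=
        Finset.sum_le_sum (fun t _ => hterm t)
      have hsplit : ρ (S ∪ (a :: l).toFinset) - ρ S =
          (ρ (insert a S ∪ l.toFinset) - ρ (insert a S)) + (ρ (insert a S) - ρ S) := by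
        rw [hset]; ring
      rw [hsplit]
      simp only [List.length_cons]
      rw [Fin.sum_univ_succ]
      simp only [List.length_cons, List.get_cons_zero, pow_zero, one_mul,
        List.get_cons_succ, Fin.val_succ]
      have := le_trans key hsum
      simp only [Fin.val_zero, pow_zero, one_mul, List.get_cons_succ']
      linarith

/-- Inequality (12): for a monotone non-decreasing `ρ` with elemental curvature bound
`κ ≥ 0` (i.e. `ρ_i(S ∪ {j}) ≤ κ · ρ_i(S)` for all `S` and distinct `i, j ∉ S`, where
`ρ_i(A) = ρ(A ∪ {i}) − ρ(A)`), for any `S ⊆ T` and any enumeration `j₁, …, j_r` of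
`T \ S`, we have `ρ(T) − ρ(S) ≤ Σ_{t=1}^{r} κ^{t−1} ρ_{j_t}(S)`. -/
theorem curvature_rank_gap_bound {V : Type*} [Fintype V] [DecidableEq V]
    (ρ : Finset V → ℝ)
    (hmono : ∀ A B : Finset V, A ⊆ B → ρ A ≤ ρ B)
    (κ : ℝ) (hκ : 0 ≤ κ)
    (hcurv : ∀ (S : Finset V) (i j : V), i ≠ j → i ∉ S → j ∉ S →
      ρ (insert i (insert j S)) - ρ (insert j S) ≤ κ * (ρ (insert i S) - ρ S))
    (S T : Finset V) (hST : S ⊆ T)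
    (j : List V) (hnodup : j.Nodup) (henum : j.toFinset = T \ S) :
    ρ T - ρ S ≤ ∑ t : Fin j.length, κ ^ (t : ℕ) * (ρ (insert (j.get t) S) - ρ S) := by
  have hdisj : ∀ x ∈ j, x ∉ S := by
    intro x hx
    have : x ∈ T \ S := henum ▸ List.mem_toFinset.mpr hx
    exact (Finset.mem_sdiff.mp this).2
  have hset : S ∪ j.toFinset = T := by
    rw [henum, Finset.union_sdiff_of_subset hST]
  have := curvature_aux ρ κ hκ hcurv j S hnodup hdisj
  rwa [hset] at this
end

section
/- (Inequality (13): lower bound on the rank of a subset.) Let V be a finite type, ρ : Finset V → ℝ a monotone non-decreasing set function, and κ ≥ 0 a real number such that for all S ⊆ V and all distinct i, j ∉ S: ρ_i(S ∪ {j}) ≤ κ · ρ_i(S), where ρ_i(A) := ρ(A ∪ {i}) − ρ(A). Let S ⊆ T ⊆ V with T \ S = {j_1, …, j_r}, suppose ρ(T) = 1, and let γ ≥ 0 satisfy ρ_{j_t}(S) ≤ γ for all t = 1, …, r. Then ρ(S) ≥ 1 − γ · Σ_{t=1}^{r} κ^{t−1}. -/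
private lemma curv_iter {V : Type*} [DecidableEq V]
    (ρ : Finset V → ℝ) (κ : ℝ) (hκ : 0 ≤ κ)
    (hcurv : ∀ (S : Finset V) (i j : V), i ≠ j → i ∉ S → j ∉ S →
      ρ (insert i (insert j S)) - ρ (insert j S) ≤ κ * (ρ (insert i S) - ρ S))
    (S : Finset V) (i : V) (hiS : i ∉ S) :
    ∀ B : Finset V, i ∉ B → (∀ b ∈ B, b ∉ S) →
      ρ (insert i (S ∪ B)) - ρ (S ∪ B) ≤ κ ^ B.card * (ρ (insert i S) - ρ S) := by
  intro B
  induction B using Finset.induction_on with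
  | empty => simp
  | @insert j B hjB ih =>
    intro hiB hBS
    have hij : i ≠ j := fun h => hiB (h ▸ Finset.mem_insert_self j B)
    have hiSB : i ∉ S ∪ B := by
      simp only [Finset.mem_union]
      rintro (h | h)
      · exact hiS h
      · exact hiB (Finset.mem_insert_of_mem h)
    have hjSB : j ∉ S ∪ B := by
      simp only [Finset.mem_union]
      rintro (h | h)
      · exact hBS j (Finset.mem_insert_self j B) h
      · exact hjB h
    have h1 : S ∪ insert j B = insert j (S ∪ B) := Finset.union_insert _ _ _
    have h2 := hcurv (S ∪ B) i j hij hiSB hjSB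
    have h3 := ih (fun h => hiB (Finset.mem_insert_of_mem h))
      (fun b hb => hBS b (Finset.mem_insert_of_mem hb))
    rw [h1, Finset.card_insert_of_notMem hjB]
    calc ρ (insert i (insert j (S ∪ B))) - ρ (insert j (S ∪ B))
        ≤ κ * (ρ (insert i (S ∪ B)) - ρ (S ∪ B)) := h2
      _ ≤ κ * (κ ^ B.card * (ρ (insert i S) - ρ S)) := by
          exact mul_le_mul_of_nonneg_left h3 hκ
      _ = κ ^ (B.card + 1) * (ρ (insert i S) - ρ S) := by ring

private lemma aux_bound {V : Type*} [DecidableEq V]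
    (ρ : Finset V → ℝ) (κ : ℝ) (hκ : 0 ≤ κ)
    (hcurv : ∀ (S : Finset V) (i j : V), i ≠ j → i ∉ S → j ∉ S →
      ρ (insert i (insert j S)) - ρ (insert j S) ≤ κ * (ρ (insert i S) - ρ S))
    (S : Finset V) (γ : ℝ) (hγ : 0 ≤ γ) :
    ∀ D : Finset V, (∀ j ∈ D, j ∉ S) → (∀ j ∈ D, ρ (insert j S) - ρ S ≤ γ) →
      ρ (S ∪ D) - ρ S ≤ γ * ∑ t ∈ Finset.range D.card, κ ^ t := by
  intro D
  induction D using Finset.induction_on with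
  | empty => simp
  | @insert j D hjD ih =>
    intro hDS hm
    have hjS : j ∉ S := hDS j (Finset.mem_insert_self j D)
    have h1 : S ∪ insert j D = insert j (S ∪ D) := Finset.union_insert _ _ _
    have hstep := curv_iter ρ κ hκ hcurv S j hjS D hjD
      (fun b hb => hDS b (Finset.mem_insert_of_mem hb))
    have hmj : ρ (insert j S) - ρ S ≤ γ := hm j (Finset.mem_insert_self j D)
    have hpow : (0:ℝ) ≤ κ ^ D.card := pow_nonneg hκ _
    have h2 : ρ (insert j (S ∪ D)) - ρ (S ∪ D) ≤ κ ^ D.card * γ :=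
      hstep.trans (mul_le_mul_of_nonneg_left hmj hpow)
    have h3 := ih (fun b hb => hDS b (Finset.mem_insert_of_mem hb))
      (fun b hb => hm b (Finset.mem_insert_of_mem hb))
    rw [h1, Finset.card_insert_of_notMem hjD, Finset.sum_range_succ]
    have : ρ (insert j (S ∪ D)) - ρ S
        = (ρ (insert j (S ∪ D)) - ρ (S ∪ D)) + (ρ (S ∪ D) - ρ S) := by ring
    rw [this, mul_add]
    have h4 : γ * κ ^ D.card = κ ^ D.card * γ := mul_comm _ _
    linarith

/-- Inequality (13): for a monotone non-decreasing `ρ` with elemental curvature bound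
`κ ≥ 0` (i.e. `ρ_i(S ∪ {j}) ≤ κ · ρ_i(S)` for all `S` and distinct `i, j ∉ S`, where
`ρ_i(A) = ρ(A ∪ {i}) − ρ(A)`), if `S ⊆ T`, `ρ(T) = 1`, `r = |T \ S|`, and every
marginal `ρ_j(S)` for `j ∈ T \ S` is at most `γ ≥ 0`, then
`ρ(S) ≥ 1 − γ · Σ_{t=1}^{r} κ^{t−1}`. -/
theorem rank_lower_bound {V : Type*} [Fintype V] [DecidableEq V]
    (ρ : Finset V → ℝ)
    (hmono : ∀ A B : Finset V, A ⊆ B → ρ A ≤ ρ B)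
    (κ : ℝ) (hκ : 0 ≤ κ)
    (hcurv : ∀ (S : Finset V) (i j : V), i ≠ j → i ∉ S → j ∉ S →
      ρ (insert i (insert j S)) - ρ (insert j S) ≤ κ * (ρ (insert i S) - ρ S))
    (S T : Finset V) (hST : S ⊆ T) (hT : ρ T = 1)
    (γ : ℝ) (hγ : 0 ≤ γ)
    (hmarg : ∀ j ∈ T \ S, ρ (insert j S) - ρ S ≤ γ) :
    1 - γ * ∑ t ∈ Finset.range (T \ S).card, κ ^ t ≤ ρ S := by
  have hTU : S ∪ (T \ S) = T := Finset.union_sdiff_of_subset hST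
  have h := aux_bound ρ κ hκ hcurv S γ hγ (T \ S)
    (fun j hj => (Finset.mem_sdiff.mp hj).2) hmarg
  rw [hTU, hT] at h
  linarith
end
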